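/- Let F and K be number fields such that [K:ℚ] is a prime number p not dividing [F:ℚ]. Then the slope σ_F(K) = 0; equivalently, some element of Gal(Q̄/F) acts on Hom(K, Q̄) with an orbit of full size [K:ℚ]. -/

import Mathlib

noncomputable section

/-- A fixed algebraic closure of `ℚ`. -/
abbrev Qbar : Type := AlgebraicClosure ℚ

/-- The orbit of an embedding `σ : K → Q̄` under the integer powers of a Galois
element `g ∈ Gal(Q̄/F)`, acting by postcomposition. -/
def gOrbit {F : Type*} [Field F] [Algebra F Qbar]
    {K : Type*} [Field K] [Algebra ℚ K]
    (g : Qbar ≃ₐ[F] Qbar) (σ : K →ₐ[ℚ] Qbar) : Set (K →ₐ[ℚ] Qbar) :=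
  {τ | ∃ n : ℤ, ∀ x : K, τ x = (g ^ n) (σ x)}

/-- `λ_F(K)`: the supremum over `g ∈ Gal(Q̄/F)` of the largest cardinality of a
`⟨g⟩`-orbit on `Hom(K, Q̄)`. -/
def lam (F : Type*) [Field F] [Algebra F Qbar]
    (K : Type*) [Field K] [Algebra ℚ K] : ℕ :=
  sSup {m : ℕ | ∃ (g : Qbar ≃ₐ[F] Qbar) (σ : K →ₐ[ℚ] Qbar),
    m = Nat.card (gOrbit g σ)}

/-- The slope `σ_F(K) = 1 − λ_F(K)/[K:ℚ]`. -/
def slopeF (F : Type*) [Field F] [Algebra F Qbar]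
    (K : Type*) [Field K] [Algebra ℚ K] : ℚ :=
  1 - (lam F K : ℚ) / (Module.finrank ℚ K : ℚ)

namespace SlopeAux

/-- Any `ℚ`-embedding of a field into `Q̄` can be conjugated into any other by an
automorphism of `Q̄`. -/
theorem exists_conj (A : Type*) [Field A] [Algebra ℚ A] (φ ψ : A →ₐ[ℚ] Qbar) :
    ∃ g : Qbar ≃ₐ[ℚ] Qbar, ∀ x, g (φ x) = ψ x := by
  let eφ : A ≃ₐ[ℚ] φ.fieldRange := AlgEquiv.ofInjectiveField φ
  let eψ : A ≃ₐ[ℚ] ψ.fieldRange := AlgEquiv.ofInjectiveField ψ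
  let χ : φ.fieldRange ≃ₐ[ℚ] ψ.fieldRange := eφ.symm.trans eψ
  haveI : Normal ℚ Qbar := by
    convert (@IsAlgClosure.normal ℚ (AlgebraicClosure ℚ) _ _ (AlgebraicClosure.instAlgebra ℚ) inferInstance)
    exact Subsingleton.elim _ _
  refine ⟨χ.liftNormal Qbar, fun x => ?_⟩
  have h1 : φ x = algebraMap φ.fieldRange Qbar (eφ x) := rfl
  rw [h1, AlgEquiv.liftNormal_commutes]
  show algebraMap ψ.fieldRange Qbar (eψ (eφ.symm (eφ x))) = ψ x
  rw [AlgEquiv.symm_apply_apply]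
  rfl

variable (K : Type*) [Field K] [Algebra ℚ K]

/-- The action of `Gal(Q̄/ℚ)` on `Hom(K, Q̄)` as a homomorphism to the permutation
group. -/
def piHom : (Qbar ≃ₐ[ℚ] Qbar) →* Equiv.Perm (K →ₐ[ℚ] Qbar) where
  toFun g :=
    { toFun := fun τ => (g : Qbar →ₐ[ℚ] Qbar).comp τ
      invFun := fun τ => (g.symm : Qbar →ₐ[ℚ] Qbar).comp τ
      left_inv := fun τ => by ext x; simp
      right_inv := fun τ => by ext x; simp }
  map_one' := Equiv.ext fun τ => AlgHom.ext fun x => rfl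
  map_mul' g h := Equiv.ext fun τ => AlgHom.ext fun x => rfl

/-- Restriction of scalars `Gal(Q̄/F) →* Gal(Q̄/ℚ)`. -/
def resHom (F : Type*) [Field F] [Algebra ℚ F] [Algebra F Qbar]
    [IsScalarTower ℚ F Qbar] :
    (Qbar ≃ₐ[F] Qbar) →* (Qbar ≃ₐ[ℚ] Qbar) where
  toFun := AlgEquiv.restrictScalars ℚ
  map_one' := rfl
  map_mul' _ _ := rfl

end SlopeAux

open SlopeAux in
theorem slope_eq_zero_of_prime_degree (F K : Type)
    [Field F] [NumberField F] [Algebra F Qbar] [Field K] [NumberField K]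
    (p : ℕ) (hp : p.Prime) (hdeg : Module.finrank ℚ K = p)
    (hndvd : ¬ p ∣ Module.finrank ℚ F) :
    slopeF F K = 0 ∧
      ∃ (g : Qbar ≃ₐ[F] Qbar) (σ : K →ₐ[ℚ] Qbar),
        Nat.card (gOrbit g σ) = Module.finrank ℚ K := by
  classical
  haveI : IsScalarTower ℚ F Qbar := IsScalarTower.of_algebraMap_eq' (Subsingleton.elim _ _)
  have hcardS : Nat.card (K →ₐ[ℚ] Qbar) = p := by
    rw [Nat.card_eq_fintype_card, AlgHom.card, hdeg]
  have hcardF : Nat.card (F →ₐ[ℚ] Qbar) = Module.finrank ℚ F := by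
    rw [Nat.card_eq_fintype_card, AlgHom.card]
  obtain ⟨σ₀⟩ : Nonempty (K →ₐ[ℚ] Qbar) :=
    (Nat.card_pos_iff.mp (hcardS ▸ hp.pos)).1
  set π := piHom K with hπ
  set r := resHom F with hr
  set Gbar := π.range with hGbar
  set Hbar := (π.comp r).range with hHbar
  -- transitivity of `Gbar` on `Hom(K, Q̄)`
  have horb : MulAction.orbit Gbar σ₀ = Set.univ := by
    ext τ
    simp only [Set.mem_univ, iff_true]
    obtain ⟨g, hg⟩ := exists_conj K σ₀ τ
    exact MulAction.mem_orbit_iff.mpr ⟨⟨π g, ⟨g, rfl⟩⟩, AlgHom.ext hg⟩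
  have hpG : p ∣ Nat.card Gbar := by
    have h1 : Nat.card (MulAction.orbit Gbar σ₀) = p := by
      rw [horb, Nat.card_congr (Equiv.Set.univ _)]
      exact hcardS
    rw [← h1, Nat.card_congr (MulAction.orbitEquivQuotientStabilizer Gbar σ₀),
      ← Subgroup.index_eq_card (MulAction.stabilizer Gbar σ₀)]
    exact Subgroup.index_dvd_card _
  -- the index of `Hbar` inside `Gbar` divides `[F:ℚ]`
  set Hbar' : Subgroup Gbar := Hbar.subgroupOf Gbar with hHbar'
  have hcomap : Hbar'.comap π.rangeRestrict = Hbar.comap π := rfl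
  have hidx1 : Hbar'.index = (Hbar.comap π).index := by
    rw [← hcomap]
    exact (Subgroup.index_comap_of_surjective _ π.rangeRestrict_surjective).symm
  have hle : r.range ≤ Hbar.comap π := by rintro g ⟨h, rfl⟩; exact ⟨h, rfl⟩
  have hidx2 : (Hbar.comap π).index ∣ r.range.index := Subgroup.index_dvd_of_le hle
  have hidx3 : r.range.index = Module.finrank ℚ F := by
    rw [Subgroup.index_eq_card, ← hcardF]
    let ι : F →ₐ[ℚ] Qbar := IsScalarTower.toAlgHom ℚ F Qbar
    let f : (Qbar ≃ₐ[ℚ] Qbar) → (F →ₐ[ℚ] Qbar) := fun g => (g : Qbar →ₐ[ℚ] Qbar).comp ι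
    have hresp : ∀ g₁ g₂ : Qbar ≃ₐ[ℚ] Qbar, (QuotientGroup.leftRel r.range) g₁ g₂ →
        f g₁ = f g₂ := by
      intro g₁ g₂ h
      rw [QuotientGroup.leftRel_apply] at h
      obtain ⟨h₀, hh⟩ := h
      have hg₂ : g₂ = g₁ * r h₀ := by rw [hh]; group
      apply AlgHom.ext; intro x
      show g₁ (ι x) = g₂ (ι x)
      rw [hg₂]
      show g₁ (ι x) = g₁ ((r h₀) (ι x))
      exact congrArg g₁ (h₀.commutes x).symm
    apply Nat.card_congr
    refine Equiv.ofBijective (Quotient.lift f hresp) ⟨?_, ?_⟩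
    · intro q₁ q₂
      refine Quotient.inductionOn₂ q₁ q₂ fun g₁ g₂ h => ?_
      have h'' : f g₁ = f g₂ := h
      have h' : ∀ x : F, g₁ (ι x) = g₂ (ι x) := fun x => DFunLike.congr_fun h'' x
      apply Quotient.sound
      show (QuotientGroup.leftRel r.range) g₁ g₂
      rw [QuotientGroup.leftRel_apply]
      have hcomm : ∀ x : F, (g₁⁻¹ * g₂) (algebraMap F Qbar x) = algebraMap F Qbar x := by
        intro x
        have : g₂ (ι x) = g₁ (ι x) := (h' x).symm
        show g₁⁻¹ (g₂ (ι x)) = ι x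
        rw [this]
        exact g₁.symm_apply_apply (ι x)
      refine ⟨AlgEquiv.ofRingEquiv (f := (g₁⁻¹ * g₂).toRingEquiv) hcomm, ?_⟩
      exact AlgEquiv.ext fun _ => rfl
    · intro ψ
      obtain ⟨g, hg⟩ := exists_conj F ι ψ
      exact ⟨Quotient.mk'' g, AlgHom.ext hg⟩
  have hndvd' : ¬ p ∣ Hbar'.index := by
    intro hd
    exact hndvd (hidx3 ▸ dvd_trans hd (hidx1 ▸ hidx2))
  have hcards : Hbar'.index * Nat.card Hbar' = Nat.card Gbar := Subgroup.index_mul_card Hbar'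
  have hpH' : p ∣ Nat.card Hbar' :=
    ((Nat.Prime.dvd_mul hp).mp (hcards ▸ hpG)).resolve_left hndvd'
  haveI : Fact p.Prime := ⟨hp⟩
  obtain ⟨x, hx⟩ := exists_prime_orderOf_dvd_card' p hpH'
  set e : Equiv.Perm (K →ₐ[ℚ] Qbar) := ((x : Gbar) : Equiv.Perm (K →ₐ[ℚ] Qbar)) with he
  have hxord : orderOf e = p := by
    rw [he, Subgroup.orderOf_coe, Subgroup.orderOf_coe, hx]
  obtain ⟨g, hg⟩ : ∃ g : Qbar ≃ₐ[F] Qbar, π (r g) = e :=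
    Subgroup.mem_subgroupOf.mp x.2
  -- the ⟨e⟩-orbit of some embedding has size p
  have he1 : e ≠ 1 := by
    intro h
    rw [h, orderOf_one] at hxord
    exact hp.one_lt.ne' hxord.symm
  obtain ⟨σ₁, hσ₁⟩ : ∃ σ₁ : K →ₐ[ℚ] Qbar, e σ₁ ≠ σ₁ := by
    by_contra hc
    push_neg at hc
    exact he1 (Equiv.ext hc)
  set M := Subgroup.zpowers e with hM
  have hMcard : Nat.card M = p := by rw [Nat.card_zpowers]; exact hxord
  have horbdvd : Nat.card (MulAction.orbit M σ₁) ∣ p := by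
    rw [← hMcard, Nat.card_congr (MulAction.orbitEquivQuotientStabilizer M σ₁),
      ← Subgroup.index_eq_card (MulAction.stabilizer M σ₁)]
    exact Subgroup.index_dvd_card _
  have horbne : Nat.card (MulAction.orbit M σ₁) ≠ 1 := by
    intro h1
    haveI := (Nat.card_eq_one_iff_unique.mp h1).1
    have hmem1 : σ₁ ∈ MulAction.orbit M σ₁ := MulAction.mem_orbit_self σ₁
    have hmem2 : e σ₁ ∈ MulAction.orbit M σ₁ := ⟨⟨e, Subgroup.mem_zpowers e⟩, rfl⟩
    exact hσ₁ (by
      have := Subsingleton.elim (⟨e σ₁, hmem2⟩ : MulAction.orbit M σ₁) ⟨σ₁, hmem1⟩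
      exact congrArg Subtype.val this)
  have horbcard : Nat.card (MulAction.orbit M σ₁) = p :=
    (hp.eq_one_or_self_of_dvd _ horbdvd).resolve_left horbne
  -- identify `gOrbit g σ₁` with the `M`-orbit of `σ₁`
  have hkey : ∀ (n : ℤ) (x : K), ((e ^ n) σ₁ : K →ₐ[ℚ] Qbar) x = (g ^ n) (σ₁ x) := by
    intro n x
    have h1 : e ^ n = π (r (g ^ n)) := by rw [map_zpow, map_zpow, hg]
    rw [h1]
    rfl
  have hgOrb : gOrbit g σ₁ = MulAction.orbit M σ₁ := by
    ext τ
    simp only [gOrbit, Set.mem_setOf_eq, MulAction.mem_orbit_iff]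
    constructor
    · rintro ⟨n, hn⟩
      exact ⟨⟨e ^ n, zpow_mem (Subgroup.mem_zpowers e) n⟩,
        (AlgHom.ext fun x => (hkey n x).trans (hn x).symm)⟩
    · rintro ⟨⟨u, hu⟩, rfl⟩
      obtain ⟨n, rfl⟩ := Subgroup.mem_zpowers_iff.mp hu
      exact ⟨n, fun x => hkey n x⟩
  have hmain : Nat.card (gOrbit g σ₁) = p := by
    rw [hgOrb]; exact horbcard
  have hub : ∀ m ∈ {m : ℕ | ∃ (g' : Qbar ≃ₐ[F] Qbar) (σ' : K →ₐ[ℚ] Qbar),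
      m = Nat.card (gOrbit g' σ')}, m ≤ p := by
    rintro m ⟨g', σ', rfl⟩
    calc Nat.card (gOrbit g' σ') ≤ Nat.card (K →ₐ[ℚ] Qbar) :=
          Nat.card_le_card_of_injective _ Subtype.val_injective
      _ = p := hcardS
  have hmem : p ∈ {m : ℕ | ∃ (g' : Qbar ≃ₐ[F] Qbar) (σ' : K →ₐ[ℚ] Qbar),
      m = Nat.card (gOrbit g' σ')} := ⟨g, σ₁, hmain.symm⟩
  have hlam : lam F K = p := le_antisymm (csSup_le ⟨p, hmem⟩ hub) (le_csSup ⟨p, hub⟩ hmem)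
  constructor
  · rw [slopeF, hlam, hdeg, div_self (by exact_mod_cast hp.ne_zero), sub_self]
  · exact ⟨g, σ₁, by rw [hdeg]; exact hmain⟩
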